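/- Let K be an algebraically closed field, V a valuation domain of K, and W an extension of V to K(X). Then V ⊂ W is an immediate extension (same value group and same residue field) if and only if L(W) = ∅. -/

import Mathlib

open scoped Pointwise Classical

section Defs

variable {K : Type*} [Field K] {Γ : Type*} [LinearOrderedCommGroupWithZero Γ]
variable {Λ : Type*} [LinearOrder Λ]

/-- `E = {s ν}` is pseudo-convergent: (additively) `v(s_ρ−s_ν) < v(s_σ−s_ρ)` for `ν<ρ<σ`.
In Mathlib's multiplicative convention this reads `v (s σ - s ρ) < v (s ρ - s ν)`. -/
def IsPseudoConvergent (v : Valuation K Γ) (s : Λ → K) : Prop :=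
  ∀ ⦃ν ρ σ : Λ⦄, ν < ρ → ρ < σ → v (s σ - s ρ) < v (s ρ - s ν)

/-- `E = {s ν}` is pseudo-divergent: (additively) `v(s_ρ−s_ν) > v(s_σ−s_ρ)` for `ν<ρ<σ`. -/
def IsPseudoDivergent (v : Valuation K Γ) (s : Λ → K) : Prop :=
  ∀ ⦃ν ρ σ : Λ⦄, ν < ρ → ρ < σ → v (s ρ - s ν) < v (s σ - s ρ)

/-- `E = {s ν}` is pseudo-stationary: the terms are distinct and all pairwise differences
have the same (nonzero) value. -/
def IsPseudoStationary (v : Valuation K Γ) (s : Λ → K) : Prop :=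
  (∀ ⦃ν μ : Λ⦄, ν ≠ μ → s ν ≠ s μ) ∧
    ∀ ⦃ν μ ν' μ' : Λ⦄, ν ≠ μ → ν' ≠ μ' → v (s ν - s μ) = v (s ν' - s μ')

/-- A pseudo-monotone sequence: pseudo-convergent, pseudo-divergent or pseudo-stationary. -/
def IsPseudoMonotone (v : Valuation K Γ) (s : Λ → K) : Prop :=
  IsPseudoConvergent v s ∨ IsPseudoDivergent v s ∨ IsPseudoStationary v s

/-- `α` is a pseudo-limit of the pseudo-convergent sequence `s`:
`v(α − s_ν) = δ_ν` for all `ν`, where `δ_ν = v(s_ρ − s_ν)` for any `ρ > ν`. -/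
def IsPseudoLimitPcv (v : Valuation K Γ) (s : Λ → K) (α : K) : Prop :=
  ∀ ⦃ν ρ : Λ⦄, ν < ρ → v (α - s ν) = v (s ρ - s ν)

/-- `α` is a pseudo-limit of the pseudo-divergent sequence `s`:
`v(α − s_ν) = δ_ν` for all sufficiently large `ν`, where `δ_ν = v(s_ρ − s_ν)` for any `ρ < ν`. -/
def IsPseudoLimitPdv (v : Valuation K Γ) (s : Λ → K) (α : K) : Prop :=
  ∃ N : Λ, ∀ ⦃ν : Λ⦄, N ≤ ν → ∀ ⦃ρ : Λ⦄, ρ < ν → v (α - s ν) = v (s ρ - s ν)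

/-- `α` is a pseudo-limit of the pseudo-stationary sequence `s`:
`v(α − s_ν) = δ` for all sufficiently large `ν`, where `δ` is the breadth. -/
def IsPseudoLimitPst (v : Valuation K Γ) (s : Λ → K) (α : K) : Prop :=
  ∃ N : Λ, ∀ ⦃ν : Λ⦄, N ≤ ν → ∀ ⦃μ μ' : Λ⦄, μ ≠ μ' → v (α - s ν) = v (s μ - s μ')

/-- `α` is a pseudo-limit of a strictly pseudo-monotone sequence `s`. -/
def IsPseudoLimitSPM (v : Valuation K Γ) (s : Λ → K) (α : K) : Prop :=
  (IsPseudoConvergent v s ∧ IsPseudoLimitPcv v s α) ∨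
    (IsPseudoDivergent v s ∧ IsPseudoLimitPdv v s α)

/-- The breadth ideal of a pseudo-convergent sequence:
(additively) `{x : v(x) > δ_ν for all ν}`. -/
def BreadthPcv (v : Valuation K Γ) (s : Λ → K) : Set K :=
  {x : K | ∀ ⦃ν ρ : Λ⦄, ν < ρ → v x < v (s ρ - s ν)}

/-- The breadth ideal of a pseudo-divergent sequence:
(additively) `{x : v(x) > δ_ν for some ν}`. -/
def BreadthPdv (v : Valuation K Γ) (s : Λ → K) : Set K :=
  {x : K | ∃ ν ρ : Λ, ρ < ν ∧ v x < v (s ρ - s ν)}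

/-- The breadth ideal of a pseudo-stationary sequence: (additively) `{x : v(x) ≥ δ}`. -/
def BreadthPst (v : Valuation K Γ) (s : Λ → K) : Set K :=
  {x : K | ∀ ⦃ν μ : Λ⦄, ν ≠ μ → v x ≤ v (s ν - s μ)}

/-- The breadth ideal of a sequence which is definitively either pseudo-convergent or
pseudo-stationary: `{x : v(x) ≤ v(s ρ - s ν)` for all sufficiently large `ν < ρ}`. -/
def BreadthCvStat (v : Valuation K Γ) (s : Λ → K) : Set K :=
  {x : K | ∃ N : Λ, ∀ ⦃ν ρ : Λ⦄, N ≤ ν → ν < ρ → v x ≤ v (s ρ - s ν)}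

/-- The ring `V_E` of rational functions mapping the tail of `E` into the valuation ring,
as a subset of `K(X)`. -/
def VESet (v : Valuation K Γ) (s : Λ → K) : Set (RatFunc K) :=
  {φ : RatFunc K | ∃ N : Λ, ∀ ⦃ν : Λ⦄, N ≤ ν → v (RatFunc.eval (RingHom.id K) (s ν) φ) ≤ 1}

end Defs

section FracIdeals

variable {K : Type*} [Field K]

/-- `I` is a fractional ideal of the valuation subring `A` of `K`. -/
def IsFractionalSub (A : ValuationSubring K) (I : Submodule A K) : Prop :=
  ∃ a : K, a ∈ A ∧ a ≠ 0 ∧ ∀ x ∈ I, a * x ∈ A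

/-- `I` is strictly divisorial: it equals the intersection of all principal fractional
ideals properly containing it. -/
def IsStrictlyDivisorial (A : ValuationSubring K) (I : Submodule A K) : Prop :=
  I = ⨅ c ∈ {c : K | I < Submodule.span A {c}}, Submodule.span A {c}

end FracIdeals

/-- `𝓛₁(W) = {α ∈ K : w(X−α) ∉ Γ_v}`, for an extension `w` of `v` to `K(X)`
(`v` being the restriction `w ∘ C`). -/
def L1 {K : Type*} [Field K] {Γ : Type*} [LinearOrderedCommGroupWithZero Γ]
    (w : Valuation (RatFunc K) Γ) : Set K :=
  {α : K | ∀ c : K, c ≠ 0 → w (RatFunc.X - RatFunc.C α) ≠ w (RatFunc.C c)}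

/-- `𝓛₂(W) = {α ∈ K : w(X−α) ∈ Γ_v, and w(X−α+c) = w(X−α) whenever v(c) = w(X−α)}`. -/
def L2 {K : Type*} [Field K] {Γ : Type*} [LinearOrderedCommGroupWithZero Γ]
    (w : Valuation (RatFunc K) Γ) : Set K :=
  {α : K | (∃ c : K, c ≠ 0 ∧ w (RatFunc.X - RatFunc.C α) = w (RatFunc.C c)) ∧
    ∀ c : K, w (RatFunc.C c) = w (RatFunc.X - RatFunc.C α) →
      w (RatFunc.X - RatFunc.C α + RatFunc.C c) = w (RatFunc.X - RatFunc.C α)}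

/-- The extension of `V` to `K(X)` given by the valuation `w` is immediate: same value group
(every `w(φ)`, `φ ≠ 0`, equals `w(C c)` for some nonzero `c ∈ K`) and same residue field
(every unit of `W` is congruent to a constant modulo the maximal ideal). -/
def ImmediateExt {K : Type*} [Field K] {Γ : Type*} [LinearOrderedCommGroupWithZero Γ]
    (w : Valuation (RatFunc K) Γ) : Prop :=
  (∀ φ : RatFunc K, φ ≠ 0 → ∃ c : K, c ≠ 0 ∧ w φ = w (RatFunc.C c)) ∧
  (∀ φ : RatFunc K, w φ = 1 → ∃ c : K, w (φ - RatFunc.C c) < 1)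

/- auxiliary -/
section MyAux

variable {K : Type*} [Field K] {Γ : Type*} [LinearOrderedCommGroupWithZero Γ]
variable (w : Valuation (RatFunc K) Γ)

/-- `φ` has the same value as a constant and residue equal to that of a constant. -/
def MyResConst (φ : RatFunc K) : Prop :=
  ∃ c : K, c ≠ 0 ∧ w (φ - RatFunc.C c) < w (RatFunc.C c)

variable {w}

lemma my_wC_ne_zero {c : K} (hc : c ≠ 0) : w (RatFunc.C c) ≠ 0 := by
  rw [Valuation.ne_zero_iff]
  simpa using hc

lemma MyResConst.val_eq {φ : RatFunc K} (h : MyResConst w φ) :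
    ∃ c : K, c ≠ 0 ∧ w (φ - RatFunc.C c) < w (RatFunc.C c) ∧ w φ = w (RatFunc.C c) := by
  obtain ⟨c, hc, hlt⟩ := h
  refine ⟨c, hc, hlt, ?_⟩
  have := Valuation.map_add_eq_of_lt_right w (y := RatFunc.C c) hlt
  rwa [sub_add_cancel] at this

lemma MyResConst.ne_zero {φ : RatFunc K} (h : MyResConst w φ) : φ ≠ 0 := by
  obtain ⟨c, hc, hlt⟩ := h
  rintro rfl
  rw [zero_sub, Valuation.map_neg] at hlt
  exact lt_irrefl _ hlt

lemma MyResConst.mul {φ ψ : RatFunc K} (hφ : MyResConst w φ) (hψ : MyResConst w ψ) :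
    MyResConst w (φ * ψ) := by
  obtain ⟨c, hc, hclt, hceq⟩ := hφ.val_eq
  obtain ⟨d, hd, hdlt, hdeq⟩ := hψ.val_eq
  refine ⟨c * d, mul_ne_zero hc hd, ?_⟩
  have hkey : φ * ψ - RatFunc.C (c * d)
      = φ * (ψ - RatFunc.C d) + RatFunc.C d * (φ - RatFunc.C c) := by
    rw [map_mul]; ring
  rw [hkey, map_mul RatFunc.C]
  refine lt_of_le_of_lt (w.map_add _ _) (max_lt ?_ ?_)
  · rw [w.map_mul, w.map_mul, hceq]
    exact mul_lt_mul_of_pos_left hdlt (zero_lt_iff.mpr (my_wC_ne_zero (w := w) hc))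
  · rw [w.map_mul, w.map_mul, mul_comm (w (RatFunc.C c))]
    exact mul_lt_mul_of_pos_left hclt (zero_lt_iff.mpr (my_wC_ne_zero (w := w) hd))

lemma MyResConst.inv {φ : RatFunc K} (hφ : MyResConst w φ) : MyResConst w φ⁻¹ := by
  obtain ⟨c, hc, hclt, hceq⟩ := hφ.val_eq
  have hφ0 : φ ≠ 0 := hφ.ne_zero
  have hC0 : RatFunc.C c ≠ 0 := by simpa using hc
  refine ⟨c⁻¹, inv_ne_zero hc, ?_⟩
  have : φ⁻¹ - RatFunc.C c⁻¹ = (RatFunc.C c - φ) / (φ * RatFunc.C c) := by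
    rw [map_inv₀]
    exact inv_sub_inv hφ0 hC0
  rw [this, map_inv₀, map_inv₀ w, w.map_div, w.map_sub_swap, w.map_mul, hceq]
  have hne : w (RatFunc.C c) * w (RatFunc.C c) ≠ 0 :=
    mul_ne_zero (my_wC_ne_zero (w := w) hc) (my_wC_ne_zero (w := w) hc)
  rw [div_lt_iff₀ (zero_lt_iff.mpr hne)]
  have h3 : (w (RatFunc.C c))⁻¹ * (w (RatFunc.C c) * w (RatFunc.C c)) = w (RatFunc.C c) :=
    by rw [inv_mul_cancel_left₀ (my_wC_ne_zero (w := w) hc)]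
  rw [h3]
  exact hclt


lemma my_resConst_C {a : K} (ha : a ≠ 0) : MyResConst w (RatFunc.C a) :=
  ⟨a, ha, by simpa using zero_lt_iff.mpr (my_wC_ne_zero (w := w) ha)⟩

lemma my_poly [IsAlgClosed K] (hlin : ∀ α : K, MyResConst w (RatFunc.X - RatFunc.C α))
    (p : Polynomial K) (hp : p ≠ 0) :
    MyResConst w (algebraMap (Polynomial K) (RatFunc K) p) := by
  have hsplit : Polynomial.Splits p := IsAlgClosed.splits p
  rw [hsplit.eq_prod_roots, map_mul, RatFunc.algebraMap_C,
      map_multiset_prod, Multiset.map_map]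
  refine (my_resConst_C (Polynomial.leadingCoeff_ne_zero.mpr hp)).mul ?_
  refine Multiset.prod_induction _ _ (fun a b ha hb => ha.mul hb) ?_ ?_
  · simpa using my_resConst_C (w := w) (one_ne_zero (α := K))
  · intro x hx
    obtain ⟨a, _, rfl⟩ := Multiset.mem_map.mp hx
    have : (algebraMap (Polynomial K) (RatFunc K)) (Polynomial.X - Polynomial.C a)
        = RatFunc.X - RatFunc.C a := by
      rw [map_sub, RatFunc.algebraMap_X, RatFunc.algebraMap_C]
    rw [Function.comp_apply, this]
    exact hlin a

lemma my_all [IsAlgClosed K] (hL : L1 w ∪ L2 w = ∅) :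
    ∀ φ : RatFunc K, φ ≠ 0 → MyResConst w φ := by
  have hlin : ∀ α : K, MyResConst w (RatFunc.X - RatFunc.C α) := by
    intro α
    have hα := Set.eq_empty_iff_forall_notMem.mp hL α
    rw [Set.mem_union] at hα
    push_neg at hα
    obtain ⟨h1, h2⟩ := hα
    simp only [L1, Set.mem_setOf_eq] at h1
    push_neg at h1
    obtain ⟨c₀, hc₀, hc₀v⟩ := h1
    simp only [L2, Set.mem_setOf_eq, not_and, not_forall] at h2
    obtain ⟨c, hcv, hcne⟩ := h2 ⟨c₀, hc₀, hc₀v⟩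
    have hc : c ≠ 0 := by
      rintro rfl
      rw [map_zero, Valuation.map_zero, hc₀v] at hcv
      exact my_wC_ne_zero (w := w) hc₀ hcv.symm
    have hle : w (RatFunc.X - RatFunc.C α + RatFunc.C c) ≤ w (RatFunc.X - RatFunc.C α) := by
      refine le_trans (w.map_add _ _) ?_
      rw [hcv]
      exact le_of_eq (max_self _)
    have hlt := lt_of_le_of_ne hle hcne
    refine ⟨-c, neg_ne_zero.mpr hc, ?_⟩
    rw [map_neg, sub_neg_eq_add, Valuation.map_neg, hcv]
    exact hlt
  intro φ hφ
  rw [← RatFunc.num_div_denom φ, div_eq_mul_inv]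
  exact (my_poly hlin _ (RatFunc.num_ne_zero hφ)).mul
    ((my_poly hlin _ (RatFunc.denom_ne_zero φ)).inv)



end MyAux

/-- Let `K` be algebraically closed, `V` a valuation domain of `K`, and `W`
an extension of `V` to `K(X)` (given by a valuation `w` on `K(X)`, with `V` the valuation
ring of the restriction). Then `V ⊂ W` is immediate if and only if `𝓛(W) = ∅`. -/
theorem stmt17 {K : Type*} [Field K] [IsAlgClosed K]
    {Γ : Type*} [LinearOrderedCommGroupWithZero Γ] (w : Valuation (RatFunc K) Γ) :
    ImmediateExt w ↔ L1 w ∪ L2 w = ∅ := by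
  constructor
  · rintro ⟨h1, h2⟩
    rw [Set.eq_empty_iff_forall_notMem]
    intro α hα
    have hXα : RatFunc.X - RatFunc.C α ≠ 0 := by
      rw [sub_ne_zero]
      intro h
      rw [← RatFunc.algebraMap_X, ← RatFunc.algebraMap_C] at h
      exact Polynomial.X_ne_C α (RatFunc.algebraMap_injective K h)
    rcases hα with hα | hα
    · obtain ⟨c, hc, hv⟩ := h1 _ hXα
      exact hα c hc hv
    · obtain ⟨⟨c, hc, hv⟩, hall⟩ := hα
      set ξ := RatFunc.X - RatFunc.C α with hξ
      have hwc := my_wC_ne_zero (w := w) hc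
      have hφ1 : w (ξ * (RatFunc.C c)⁻¹) = 1 := by
        rw [w.map_mul, map_inv₀ w, hv, mul_inv_cancel₀ hwc]
      obtain ⟨d, hd⟩ := h2 _ hφ1
      have hkey : w (ξ - RatFunc.C (c * d)) < w ξ := by
        have hrw : ξ - RatFunc.C (c * d) = (ξ * (RatFunc.C c)⁻¹ - RatFunc.C d) * RatFunc.C c := by
          have hC0 : RatFunc.C c ≠ 0 := by simpa using hc
          field_simp
          rw [map_mul]
        rw [hrw, w.map_mul, hv, mul_comm]
        calc w (RatFunc.C c) * w (ξ * (RatFunc.C c)⁻¹ - RatFunc.C d)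
            < w (RatFunc.C c) * 1 := mul_lt_mul_of_pos_left hd (zero_lt_iff.mpr hwc)
          _ = w (RatFunc.C c) := mul_one _
      have hcd : w (RatFunc.C (c * d)) = w ξ := by
        by_contra hne
        have hne' : w ξ ≠ w (-RatFunc.C (c * d)) := by
          rw [Valuation.map_neg]
          exact fun h => hne h.symm
        have h' : w (ξ - RatFunc.C (c * d)) = max (w ξ) (w (RatFunc.C (c * d))) := by
          rw [sub_eq_add_neg, w.map_add_of_distinct_val hne', Valuation.map_neg]
        have hge : w ξ ≤ w (ξ - RatFunc.C (c * d)) := by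
          rw [h']; exact le_max_left _ _
        exact absurd hkey (not_lt.mpr hge)
      have h1' : w (RatFunc.C (-(c * d))) = w ξ := by
        rw [map_neg, Valuation.map_neg]
        exact hcd
      have hfin := hall _ h1'
      rw [map_neg, ← sub_eq_add_neg] at hfin
      exact absurd hfin (ne_of_lt hkey)
  · intro hL
    constructor
    · intro φ hφ
      obtain ⟨c, hc, _, heq⟩ := (my_all hL φ hφ).val_eq
      exact ⟨c, hc, heq⟩
    · intro φ hφ1
      have hφ : φ ≠ 0 := by
        intro h
        rw [h, Valuation.map_zero] at hφ1
        exact zero_ne_one hφ1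
      obtain ⟨c, hc, hlt, heq⟩ := (my_all hL φ hφ).val_eq
      rw [heq] at hφ1
      exact ⟨c, by rwa [hφ1] at hlt⟩
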